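/- arXiv:2411.11997 — 8 statements merged into one kernel-verified Lean document; each statement's English description precedes it below -/
import Mathlib

section
/- If A is a subspace of V such that R ∈ A, then dim A^⊥ = dim V − dim A + 1. -/
/-- The ω-orthogonal complement of a subspace `A` of `V`:
`A^⊥ = {v ∈ V | ω(v,a) = 0 for every a ∈ A}`. -/
def omegaPerp {V : Type*} [AddCommGroup V] [Module ℝ V]
    (ω : V →ₗ[ℝ] V →ₗ[ℝ] ℝ) (A : Submodule ℝ V) : Submodule ℝ V where
  carrier := {v | ∀ a ∈ A, ω v a = 0}
  add_mem' := by
    intro x y hx hy a ha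
    simp [map_add, hx a ha, hy a ha]
  zero_mem' := by
    intro a ha
    simp
  smul_mem' := by
    intro c x hx a ha
    simp [map_smul, hx a ha]


open Module Submodule LinearMap

-- finrank of dualAnnihilator
lemma finrank_dualAnn {K V : Type*} [Field K] [AddCommGroup V] [Module K V]
    [FiniteDimensional K V] (W : Submodule K V) :
    finrank K W.dualAnnihilator = finrank K V - finrank K W := by
  rw [← (Subspace.quotEquivAnnihilator W).finrank_eq, Submodule.finrank_quotient]

-- finrank of image of a submodule containing the kernel
lemma finrank_map_of_ker_le {K V W : Type*} [Field K] [AddCommGroup V] [Module K V]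
    [AddCommGroup W] [Module K W] [FiniteDimensional K V]
    (f : V →ₗ[K] W) (p : Submodule K V) (h : LinearMap.ker f ≤ p) :
    finrank K (p.map f) + finrank K (LinearMap.ker f) = finrank K p := by
  have h1 := LinearMap.finrank_range_add_finrank_ker (f.domRestrict p)
  rw [LinearMap.range_domRestrict, LinearMap.ker_domRestrict] at h1
  rw [← h1, (Submodule.comapSubtypeEquivOfLe h).finrank_eq]

/-- If A is a subspace of V with R ∈ A, then dim A^⊥ = dim V − dim A + 1. -/
theorem perp_finrank_of_mem {n : ℕ} {V : Type*} [AddCommGroup V] [Module ℝ V]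
    [FiniteDimensional ℝ V] (hdim : Module.finrank ℝ V = 2 * n + 1)
    (ω : V →ₗ[ℝ] V →ₗ[ℝ] ℝ) (halt : ∀ x, ω x x = 0)
    (R : V) (hR : R ≠ 0) (hker : LinearMap.ker ω = Submodule.span ℝ {R})
    (A : Submodule ℝ V) (hRA : R ∈ A) :
    Module.finrank ℝ (omegaPerp ω A) = Module.finrank ℝ V - Module.finrank ℝ A + 1 := by
  classical
  -- skew symmetry
  have hskew : ∀ x y, ω x y = - ω y x := by
    intro x y
    have h := halt (x + y)
    simp only [map_add, LinearMap.add_apply, halt] at h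
    linarith
  have hflip : ω.flip = -ω := by
    ext x y
    simp [hskew y x]
  -- range ω = (span R)ᵃ
  have hrange : LinearMap.range ω = (Submodule.span ℝ {R}).dualAnnihilator := by
    rw [← hker, LinearMap.dualAnnihilator_ker_eq_range_flip, hflip]
    ext f; constructor
    · rintro ⟨x, rfl⟩; exact ⟨-x, by simp⟩
    · rintro ⟨x, rfl⟩; exact ⟨-x, by simp⟩
  set ψ : V →ₗ[ℝ] Module.Dual ℝ A := A.subtype.dualMap.comp ω with hψ
  have homega : ∀ v, v ∈ omegaPerp ω A ↔ ∀ a ∈ A, ω v a = 0 := fun v => Iff.rfl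
  have hkerψ : LinearMap.ker ψ = omegaPerp ω A := by
    ext v
    simp only [LinearMap.mem_ker, homega, hψ, LinearMap.comp_apply]
    constructor
    · intro h a ha
      have := congrArg (fun f => f ⟨a, ha⟩) h
      simpa using this
    · intro h
      ext a
      simpa using h a a.2
  have hkerdm : LinearMap.ker (A.subtype.dualMap) = A.dualAnnihilator := by
    rw [LinearMap.ker_dualMap_eq_dualAnnihilator_range, Submodule.range_subtype]
  have hle : A.dualAnnihilator ≤ (Submodule.span ℝ {R}).dualAnnihilator :=
    Submodule.dualAnnihilator_anti (Submodule.span_le.mpr (by simpa using hRA))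
  have hrangeψ : LinearMap.range ψ = ((Submodule.span ℝ {R}).dualAnnihilator).map
      A.subtype.dualMap := by
    rw [hψ, LinearMap.range_comp, hrange]
  -- dimensions
  have hda1 : finrank ℝ ((Submodule.span ℝ {R}).dualAnnihilator) = finrank ℝ V - 1 := by
    rw [finrank_dualAnn, finrank_span_singleton hR]
  have hda2 : finrank ℝ A.dualAnnihilator = finrank ℝ V - finrank ℝ A := finrank_dualAnn A
  have hmap := finrank_map_of_ker_le A.subtype.dualMap ((Submodule.span ℝ {R}).dualAnnihilator)
    (by rw [hkerdm]; exact hle)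
  rw [hkerdm, hda1, hda2] at hmap
  have hrn := LinearMap.finrank_range_add_finrank_ker ψ
  rw [hkerψ, hrangeψ] at hrn
  have hAle : finrank ℝ A ≤ finrank ℝ V := Submodule.finrank_le A
  have hA1 : 1 ≤ finrank ℝ A := by
    have : finrank ℝ (Submodule.span ℝ ({R} : Set V)) ≤ finrank ℝ A :=
      Submodule.finrank_mono (Submodule.span_le.mpr (by simpa using hRA))
    rwa [finrank_span_singleton hR] at this
  omega
end

section
/- If A is a subspace of V such that R ∉ A, then (A^⊥)^⊥ = A ⊕ span{R}, i.e. the double ω-orthogonal complement of A is the internal direct sum of A and the line spanned by R. -/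
/-- If R ∉ A, then (A^⊥)^⊥ = A ⊕ span{R} (an internal direct sum). -/
theorem perp_perp_of_not_mem {n : ℕ} {V : Type*} [AddCommGroup V] [Module ℝ V]
    [FiniteDimensional ℝ V] (hdim : Module.finrank ℝ V = 2 * n + 1)
    (ω : V →ₗ[ℝ] V →ₗ[ℝ] ℝ) (halt : ∀ x, ω x x = 0)
    (R : V) (hR : R ≠ 0) (hker : LinearMap.ker ω = Submodule.span ℝ {R})
    (A : Submodule ℝ V) (hRA : R ∉ A) :
    omegaPerp ω (omegaPerp ω A) = A ⊔ Submodule.span ℝ {R} ∧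
      Disjoint A (Submodule.span ℝ {R}) := by
  have halt' : LinearMap.IsAlt ω := halt
  have hrefl : LinearMap.IsRefl ω := halt'.isRefl
  -- omegaPerp = BilinForm.orthogonal
  have hperp : ∀ W : Submodule ℝ V, omegaPerp ω W = LinearMap.BilinForm.orthogonal ω W := by
    intro W
    ext v
    constructor
    · intro hv a ha
      exact hrefl _ _ (hv a ha)
    · intro hv a ha
      exact hrefl _ _ (hv a ha)
  -- orthogonal ⊤ = ker ω = span R
  have htop : LinearMap.BilinForm.orthogonal ω ⊤ = Submodule.span ℝ {R} := by
    rw [← hker]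
    ext v
    simp only [LinearMap.BilinForm.mem_orthogonal_iff, LinearMap.mem_ker]
    constructor
    · intro h
      ext u
      exact hrefl _ _ (h u trivial)
    · intro h u _
      have : ω v u = 0 := by rw [h]; rfl
      exact hrefl _ _ this
  -- disjointness
  have hdisj : Disjoint A (Submodule.span ℝ {R}) := by
    rw [Submodule.disjoint_span_singleton]
    intro h; exact absurd h hRA
  refine ⟨?_, hdisj⟩
  have hRspan : R ∈ Submodule.span ℝ {R} := Submodule.mem_span_singleton_self R
  have hRker : ∀ u, ω R u = 0 := by
    intro u
    have : R ∈ LinearMap.ker ω := by rw [hker]; exact hRspan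
    rw [LinearMap.mem_ker.mp this]; rfl
  -- span R ≤ orthogonal W for any W
  have hspanle : ∀ W : Submodule ℝ V, Submodule.span ℝ {R} ≤ LinearMap.BilinForm.orthogonal ω W := by
    intro W
    rw [Submodule.span_singleton_le_iff_mem]
    intro a _
    exact hrefl _ _ (hRker a)
  set P := LinearMap.BilinForm.orthogonal ω A with hP
  have h1 : Module.finrank ℝ A + Module.finrank ℝ P =
      Module.finrank ℝ V + Module.finrank ℝ (A ⊓ LinearMap.BilinForm.orthogonal ω ⊤ : Submodule ℝ V) :=
    LinearMap.BilinForm.finrank_add_finrank_orthogonal hrefl A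
  rw [htop, hdisj.eq_bot, finrank_bot, add_zero] at h1
  have h2 : Module.finrank ℝ P + Module.finrank ℝ (LinearMap.BilinForm.orthogonal ω P) =
      Module.finrank ℝ V + Module.finrank ℝ (P ⊓ LinearMap.BilinForm.orthogonal ω ⊤ : Submodule ℝ V) :=
    LinearMap.BilinForm.finrank_add_finrank_orthogonal hrefl P
  have hPinf : P ⊓ LinearMap.BilinForm.orthogonal ω ⊤ = Submodule.span ℝ {R} := by
    rw [htop]
    exact inf_eq_right.mpr (hspanle A)
  rw [hPinf] at h2
  have hr1 : Module.finrank ℝ (Submodule.span ℝ ({R} : Set V)) = 1 :=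
    finrank_span_singleton hR
  rw [hr1] at h2
  -- finrank of sup
  have h3 : Module.finrank ℝ (A ⊔ Submodule.span ℝ {R} : Submodule ℝ V) =
      Module.finrank ℝ A + 1 := by
    have := Submodule.finrank_sup_add_finrank_inf_eq A (Submodule.span ℝ {R})
    rw [hdisj.eq_bot, finrank_bot, add_zero, hr1] at this
    omega
  -- inclusion
  have hle : A ⊔ Submodule.span ℝ {R} ≤ omegaPerp ω (omegaPerp ω A) := by
    rw [hperp, hperp]
    exact sup_le (LinearMap.BilinForm.le_orthogonal_orthogonal hrefl) (hspanle P)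
  refine (Submodule.eq_of_le_of_finrank_le hle ?_).symm
  rw [hperp, hperp, h3, ← hP]
  omega
end

section
/- For every subspace A of V, the image of A^⊥ under ♭₀ equals A° ∩ ♭₀(V) (the intersection of the annihilator of A with the range of ♭₀), and the kernel of the restriction of ♭₀ to A^⊥ equals the line spanned by R. -/
/-- For every subspace A of V, the image of A^⊥ under ♭₀ : V → V*, ♭₀(v) = ω(v,·),
equals A° ∩ ♭₀(V), and the kernel of the restriction of ♭₀ to A^⊥ equals the line
spanned by R. -/
theorem flat_image_perp_and_ker_restrict {n : ℕ} {V : Type*} [AddCommGroup V] [Module ℝ V]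
    [FiniteDimensional ℝ V] (hdim : Module.finrank ℝ V = 2 * n + 1)
    (ω : V →ₗ[ℝ] V →ₗ[ℝ] ℝ) (halt : ∀ x, ω x x = 0)
    (R : V) (hR : R ≠ 0) (hker : LinearMap.ker ω = Submodule.span ℝ {R})
    (flat : V →ₗ[ℝ] Module.Dual ℝ V) (hflat : ∀ v u, flat v u = ω v u)
    (A : Submodule ℝ V) :
    Submodule.map flat (omegaPerp ω A) = A.dualAnnihilator ⊓ LinearMap.range flat ∧
      Submodule.map (omegaPerp ω A).subtype
        (LinearMap.ker (flat.domRestrict (omegaPerp ω A))) = Submodule.span ℝ {R} := by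
  have hωflat : ∀ v, flat v = ω v := fun v => LinearMap.ext fun u => hflat v u
  constructor
  · ext α
    simp only [Submodule.mem_map, Submodule.mem_inf, Submodule.mem_dualAnnihilator,
      LinearMap.mem_range]
    constructor
    · rintro ⟨v, hv, rfl⟩
      exact ⟨fun a ha => by rw [hflat]; exact hv a ha, v, rfl⟩
    · rintro ⟨hann, v, rfl⟩
      exact ⟨v, fun a ha => by rw [← hflat]; exact hann a ha, rfl⟩
  · ext x
    simp only [Submodule.mem_map, LinearMap.mem_ker, LinearMap.domRestrict_apply,
      Submodule.coe_subtype, Subtype.exists]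
    constructor
    · rintro ⟨v, hv, hfv, rfl⟩
      rw [← hker, LinearMap.mem_ker, ← hωflat]
      exact hfv
    · intro hx
      have hx' : x ∈ LinearMap.ker ω := hker ▸ hx
      have hωx : ω x = 0 := hx'
      have hxperp : x ∈ omegaPerp ω A := fun a _ => by simp [hωx]
      exact ⟨x, hxperp, by rw [hωflat]; exact hωx, rfl⟩
end

section
/- For a subspace A of V, the annihilator A° is contained in the range ♭₀(V) if and only if R ∈ A. -/
/-- For a subspace A of V, the annihilator A° is contained in the range of
♭₀ : V → V*, ♭₀(v) = ω(v,·), if and only if R ∈ A. -/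
theorem dualAnnihilator_le_range_iff {n : ℕ} {V : Type*} [AddCommGroup V] [Module ℝ V]
    [FiniteDimensional ℝ V] (hdim : Module.finrank ℝ V = 2 * n + 1)
    (ω : V →ₗ[ℝ] V →ₗ[ℝ] ℝ) (halt : ∀ x, ω x x = 0)
    (R : V) (hR : R ≠ 0) (hker : LinearMap.ker ω = Submodule.span ℝ {R})
    (flat : V →ₗ[ℝ] Module.Dual ℝ V) (hflat : ∀ v u, flat v u = ω v u)
    (A : Submodule ℝ V) :
    A.dualAnnihilator ≤ LinearMap.range flat ↔ R ∈ A := by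
  have hRker : ω R = 0 := by
    have : R ∈ LinearMap.ker ω := by
      rw [hker]; exact Submodule.mem_span_singleton_self R
    exact this
  -- skew symmetry
  have hskew : ∀ v u, ω v u = - ω u v := by
    intro v u
    have h := halt (v + u)
    simp only [map_add, LinearMap.add_apply, halt] at h
    linarith
  -- ker flat = span R
  have hkerflat : LinearMap.ker flat = Submodule.span ℝ {R} := by
    rw [← hker]
    ext v
    simp only [LinearMap.mem_ker]
    constructor
    · intro h
      ext u
      rw [← hflat, h]
    · intro h
      ext u
      rw [hflat, h]
  have hspanrank : Module.finrank ℝ (Submodule.span ℝ {R}) = 1 :=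
    finrank_span_singleton hR
  have hrange : LinearMap.range flat = (Submodule.span ℝ {R}).dualAnnihilator := by
    apply Submodule.eq_of_le_of_finrank_eq
    · rintro α ⟨v, rfl⟩
      rw [Submodule.mem_dualAnnihilator]
      intro w hw
      rw [Submodule.mem_span_singleton] at hw
      obtain ⟨c, rfl⟩ := hw
      rw [map_smul]
      simp only [smul_eq_mul, hflat]
      rw [hskew v R]
      have : ω R v = 0 := by rw [hRker]; rfl
      rw [this]; ring
    · have h1 : Module.finrank ℝ (LinearMap.range flat)
          + Module.finrank ℝ (LinearMap.ker flat) = Module.finrank ℝ V :=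
        LinearMap.finrank_range_add_finrank_ker flat
      rw [hkerflat, hspanrank] at h1
      have h2 : Module.finrank ℝ (Submodule.span ℝ {R}).dualAnnihilator
          = Module.finrank ℝ (V ⧸ Submodule.span ℝ {R}) := by
        rw [(Submodule.span ℝ {R}).dualQuotEquivDualAnnihilator.symm.finrank_eq,
          Subspace.dual_finrank_eq]
      have h3 := Submodule.finrank_quotient_add_finrank (Submodule.span ℝ {R})
      rw [hspanrank] at h3
      rw [h2]
      omega
  rw [hrange, Subspace.dualAnnihilator_le_dualAnnihilator_iff,
    Submodule.span_singleton_le_iff_mem]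
end

section
/- If B is a subspace of V such that R ∉ B, then B^⊥ ∩ (B^⊥)^⊥ = (B ∩ B^⊥) ⊕ span{R}; that is, the radical of the restriction of ω to the subspace W = B^⊥ is the internal direct sum of B ∩ B^⊥ and the line spanned by R. -/
/-- If B is a subspace of V with R ∉ B, then
B^⊥ ∩ (B^⊥)^⊥ = (B ∩ B^⊥) ⊕ span{R} (an internal direct sum). -/
theorem radical_perp_eq {n : ℕ} {V : Type*} [AddCommGroup V] [Module ℝ V]
    [FiniteDimensional ℝ V] (hdim : Module.finrank ℝ V = 2 * n + 1)
    (ω : V →ₗ[ℝ] V →ₗ[ℝ] ℝ) (halt : ∀ x, ω x x = 0)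
    (R : V) (hR : R ≠ 0) (hker : LinearMap.ker ω = Submodule.span ℝ {R})
    (B : Submodule ℝ V) (hRB : R ∉ B) :
    omegaPerp ω B ⊓ omegaPerp ω (omegaPerp ω B) =
        (B ⊓ omegaPerp ω B) ⊔ Submodule.span ℝ {R} ∧
      Disjoint (B ⊓ omegaPerp ω B) (Submodule.span ℝ {R}) := by
  have hAlt : LinearMap.IsAlt ω := halt
  have hRefl : ω.IsRefl := hAlt.isRefl
  -- omegaPerp equals BilinForm.orthogonal
  have perp_eq : ∀ A : Submodule ℝ V, omegaPerp ω A = LinearMap.BilinForm.orthogonal ω A := by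
    intro A
    ext v
    constructor
    · intro h a ha; exact hRefl v a (h a ha)
    · intro h a ha; exact hRefl a v (h a ha)
  -- radical is span R
  have rad_eq : LinearMap.BilinForm.orthogonal ω ⊤ = Submodule.span ℝ {R} := by
    rw [← hker]
    ext v
    simp only [LinearMap.BilinForm.mem_orthogonal_iff, LinearMap.mem_ker]
    constructor
    · intro h; ext u; exact hRefl u v (h u trivial)
    · intro h u _; exact hRefl v u (by rw [h]; rfl)
  -- R is in the kernel pointwise
  have hRker : ∀ u : V, ω R u = 0 := by
    intro u
    have : R ∈ LinearMap.ker ω := hker ▸ Submodule.mem_span_singleton_self R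
    rw [LinearMap.mem_ker] at this
    rw [this]; rfl
  -- disjointness of B and span R
  have hdisjBR : Disjoint B (Submodule.span ℝ {R}) := by
    rw [Submodule.disjoint_span_singleton']
    · exact hRB
    · exact hR
  set W := LinearMap.BilinForm.orthogonal ω B with hW
  -- R ∈ orthogonal of anything
  have hRany : ∀ A : Submodule ℝ V, R ∈ LinearMap.BilinForm.orthogonal ω A := by
    intro A a _
    exact hRefl R a (hRker a)
  have hspanW : Submodule.span ℝ {R} ≤ W := by
    rw [Submodule.span_singleton_le_iff_mem]; exact hRany B
  have hWR : W ⊓ Submodule.span ℝ {R} = Submodule.span ℝ {R} :=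
    inf_eq_right.mpr hspanW
  have hBR : B ⊓ Submodule.span ℝ {R} = ⊥ := disjoint_iff.mp hdisjBR
  have h1 := LinearMap.BilinForm.finrank_add_finrank_orthogonal hRefl B
  rw [← hW] at h1
  have h2 := LinearMap.BilinForm.finrank_add_finrank_orthogonal hRefl W
  rw [rad_eq, hBR, finrank_bot, add_zero] at h1
  rw [rad_eq, hWR, finrank_span_singleton hR] at h2
  -- finrank of B ⊔ span R
  have hsup : Module.finrank ℝ ↥(B ⊔ Submodule.span ℝ {R}) = Module.finrank ℝ B + 1 := by
    have := Submodule.finrank_sup_add_finrank_inf_eq B (Submodule.span ℝ {R})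
    rw [hBR, finrank_bot, add_zero, finrank_span_singleton hR] at this
    exact this
  have hle : B ⊔ Submodule.span ℝ {R} ≤ LinearMap.BilinForm.orthogonal ω W := by
    apply sup_le
    · exact LinearMap.BilinForm.le_orthogonal_orthogonal hRefl
    · rw [Submodule.span_singleton_le_iff_mem]; exact hRany W
  have hdd : LinearMap.BilinForm.orthogonal ω W = B ⊔ Submodule.span ℝ {R} := by
    refine (Submodule.eq_of_le_of_finrank_le hle ?_).symm
    rw [hsup]; omega
  constructor
  · rw [perp_eq, perp_eq, ← hW, hdd]
    rw [inf_comm, sup_comm B, sup_inf_assoc_of_le _ hspanW, sup_comm, inf_comm]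
  · exact Disjoint.mono_left inf_le_left hdisjBR
end

section
/- Let B be a subspace of V with R ∉ B, set W = B^⊥ and C = B ∩ B^⊥ (note C ⊆ W and R ∈ W), and let π : W → W/C be the quotient projection. Then there exists a unique alternating bilinear form ω̄ on the quotient space W/C satisfying ω̄(π(u), π(v)) = ω(u,v) for all u, v ∈ W; moreover π(R) ≠ 0 and the kernel {x ∈ W/C : ω̄(x,y) = 0 for every y ∈ W/C} of ω̄ equals the one-dimensional subspace spanned by π(R). -/
lemma mem_omegaPerp' {V : Type*} [AddCommGroup V] [Module ℝ V]
    (ω : V →ₗ[ℝ] V →ₗ[ℝ] ℝ) (A : Submodule ℝ V) (v : V) :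
    v ∈ omegaPerp ω A ↔ ∀ a ∈ A, ω v a = 0 := Iff.rfl

lemma omegaPerp_eq_comap' {V : Type*} [AddCommGroup V] [Module ℝ V]
    (ω : V →ₗ[ℝ] V →ₗ[ℝ] ℝ) (A : Submodule ℝ V) :
    omegaPerp ω A = Submodule.comap ω A.dualAnnihilator := by
  ext v
  rw [mem_omegaPerp', Submodule.mem_comap, Submodule.mem_dualAnnihilator]

lemma skew' {V : Type*} [AddCommGroup V] [Module ℝ V]
    (ω : V →ₗ[ℝ] V →ₗ[ℝ] ℝ) (halt : ∀ x, ω x x = 0) (u v : V) :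
    ω u v = - ω v u := by
  have h := halt (u + v)
  simp only [map_add, LinearMap.add_apply, halt] at h
  linarith

lemma finrank_comap' {V D : Type*} [AddCommGroup V] [Module ℝ V] [FiniteDimensional ℝ V]
    [AddCommGroup D] [Module ℝ D] (f : V →ₗ[ℝ] D) (S : Submodule ℝ D) :
    Module.finrank ℝ (Submodule.comap f S) =
      Module.finrank ℝ ↥(LinearMap.range f ⊓ S) + Module.finrank ℝ (LinearMap.ker f) := by
  have h1 := LinearMap.finrank_range_add_finrank_ker (f.domRestrict (Submodule.comap f S))
  rw [LinearMap.range_domRestrict, Submodule.map_comap_eq, LinearMap.ker_domRestrict] at h1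
  have hle : LinearMap.ker f ≤ Submodule.comap f S := by
    intro x hx; simp [Submodule.mem_comap, LinearMap.mem_ker.mp hx]
  have h2 : Module.finrank ℝ ((LinearMap.ker f).comap (Submodule.comap f S).subtype)
      = Module.finrank ℝ (LinearMap.ker f) :=
    (Submodule.comapSubtypeEquivOfLe hle).finrank_eq
  omega

lemma finrank_ann' {V : Type*} [AddCommGroup V] [Module ℝ V] [FiniteDimensional ℝ V]
    (A : Submodule ℝ V) :
    Module.finrank ℝ A.dualAnnihilator + Module.finrank ℝ A = Module.finrank ℝ V := by
  have h := Submodule.finrank_quotient_add_finrank A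
  have e : Module.finrank ℝ (V ⧸ A) = Module.finrank ℝ A.dualAnnihilator :=
    (Subspace.quotEquivAnnihilator A).finrank_eq
  omega

lemma perp_perp_le' {n : ℕ} {V : Type*} [AddCommGroup V] [Module ℝ V]
    [FiniteDimensional ℝ V] (hdim : Module.finrank ℝ V = 2 * n + 1)
    (ω : V →ₗ[ℝ] V →ₗ[ℝ] ℝ) (halt : ∀ x, ω x x = 0)
    (R : V) (hR : R ≠ 0) (hker : LinearMap.ker ω = Submodule.span ℝ {R})
    (B : Submodule ℝ V) (hRB : R ∉ B) :
    omegaPerp ω (omegaPerp ω B) ≤ B ⊔ Submodule.span ℝ {R} := by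
  set K : Submodule ℝ V := Submodule.span ℝ {R} with hK
  set W : Submodule ℝ V := omegaPerp ω B with hWdef
  have hskew := skew' ω halt
  have hωR : ω R = 0 := by
    have : R ∈ LinearMap.ker ω := hker ▸ Submodule.mem_span_singleton_self R
    exact LinearMap.mem_ker.mp this
  have hfK : Module.finrank ℝ K = 1 := finrank_span_singleton hR
  have hfker : Module.finrank ℝ (LinearMap.ker ω) = 1 := by rw [hker]; exact hfK
  -- range ω = K.dualAnnihilator
  have hrange : LinearMap.range ω = K.dualAnnihilator := by
    have h1 := LinearMap.finrank_range_add_finrank_ker ω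
    have h2 := finrank_ann' K
    rw [hfker] at h1; rw [hfK, hdim] at h2; rw [hdim] at h1
    apply Submodule.eq_of_le_of_finrank_eq
    · rintro f ⟨v, rfl⟩
      rw [Submodule.mem_dualAnnihilator]
      intro w hw
      obtain ⟨c, rfl⟩ := Submodule.mem_span_singleton.mp hw
      rw [map_smul]
      have : ω v R = 0 := by rw [hskew v R, hωR]; simp
      simp [this]
    · have e1 : Module.finrank ℝ ↥(LinearMap.range ω) = 2 * n := by omega
      have e2 : (2 * n : ℕ) = Module.finrank ℝ ↥(K.dualAnnihilator) := by omega
      rw [e1]; exact e2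
  -- K ≤ W
  have hKW : K ≤ W := by
    rw [hK, Submodule.span_le, Set.singleton_subset_iff]
    intro a _; rw [hωR]; simp
  have hdisj : Disjoint B K := (Submodule.disjoint_span_singleton' hR).mpr hRB
  have hBK : Module.finrank ℝ ↥(B ⊔ K) = Module.finrank ℝ B + 1 := by
    have := Submodule.finrank_sup_add_finrank_inf_eq B K
    rw [hdisj.eq_bot, finrank_bot, hfK] at this
    omega
  -- finrank W
  have hWB : Module.finrank ℝ W + Module.finrank ℝ B = 2 * n + 1 := by
    have h1 : Module.finrank ℝ W =
        Module.finrank ℝ ↥(LinearMap.range ω ⊓ B.dualAnnihilator) + 1 := by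
      rw [hWdef, omegaPerp_eq_comap', finrank_comap', hfker]
    rw [hrange, inf_comm, ← Submodule.dualAnnihilator_sup_eq] at h1
    have h1' : Module.finrank ℝ W =
        Module.finrank ℝ (Submodule.dualAnnihilator (B ⊔ K)) + 1 := h1
    have h2 := finrank_ann' (B ⊔ K)
    rw [hBK, hdim] at h2
    omega
  -- finrank W^⊥
  have hWperp : Module.finrank ℝ (omegaPerp ω W) = Module.finrank ℝ B + 1 := by
    have h1 : Module.finrank ℝ (omegaPerp ω W) =
        Module.finrank ℝ ↥(LinearMap.range ω ⊓ W.dualAnnihilator) + 1 := by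
      rw [omegaPerp_eq_comap', finrank_comap', hfker]
    rw [hrange, inf_comm, ← Submodule.dualAnnihilator_sup_eq, sup_eq_left.mpr hKW] at h1
    have h1' : Module.finrank ℝ (omegaPerp ω W) =
        Module.finrank ℝ (Submodule.dualAnnihilator W) + 1 := h1
    have h2 := finrank_ann' W
    rw [hdim] at h2
    omega
  -- B ⊔ K ≤ W^⊥ with equal finranks
  have hle : B ⊔ K ≤ omegaPerp ω W := by
    apply sup_le
    · intro b hb w hw
      rw [hskew b w]
      simp [hw b hb]
    · rw [hK, Submodule.span_le, Set.singleton_subset_iff]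
      intro w _; rw [hωR]; simp
  have heq : B ⊔ K = omegaPerp ω W := by
    apply Submodule.eq_of_le_of_finrank_eq hle
    rw [hWperp, hBK]
  rw [heq]


/-- Let B be a subspace of V with R ∉ B, set W = B^⊥ and C = B ∩ B^⊥
(note C ⊆ W and R ∈ W), and let π : W → W/C be the quotient projection. Then
π(R) ≠ 0 and there exists a unique bilinear form ω̄ on W/C satisfying
ω̄(π u, π v) = ω(u,v) for all u, v ∈ W; this ω̄ is alternating and its kernel
equals the one-dimensional subspace spanned by π(R). -/
theorem quotient_form_exists_unique {n : ℕ} {V : Type*} [AddCommGroup V] [Module ℝ V]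
    [FiniteDimensional ℝ V] (hdim : Module.finrank ℝ V = 2 * n + 1)
    (ω : V →ₗ[ℝ] V →ₗ[ℝ] ℝ) (halt : ∀ x, ω x x = 0)
    (R : V) (hR : R ≠ 0) (hker : LinearMap.ker ω = Submodule.span ℝ {R})
    (B : Submodule ℝ V) (hRB : R ∉ B) (hRW : R ∈ omegaPerp ω B)
    (C : Submodule ℝ (omegaPerp ω B))
    (hC : C = Submodule.comap (omegaPerp ω B).subtype (B ⊓ omegaPerp ω B)) :
    C.mkQ ⟨R, hRW⟩ ≠ 0 ∧
      ∃ ωbar : ((omegaPerp ω B) ⧸ C) →ₗ[ℝ] ((omegaPerp ω B) ⧸ C) →ₗ[ℝ] ℝ,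
        ((∀ x, ωbar x x = 0) ∧
          (∀ u v : omegaPerp ω B, ωbar (C.mkQ u) (C.mkQ v) = ω u v) ∧
          LinearMap.ker ωbar = Submodule.span ℝ {C.mkQ ⟨R, hRW⟩}) ∧
        ∀ ωbar' : ((omegaPerp ω B) ⧸ C) →ₗ[ℝ] ((omegaPerp ω B) ⧸ C) →ₗ[ℝ] ℝ,
          (∀ u v : omegaPerp ω B, ωbar' (C.mkQ u) (C.mkQ v) = ω u v) → ωbar' = ωbar := by
  have hskew := skew' ω halt
  have hωR : ω R = 0 := by
    have : R ∈ LinearMap.ker ω := hker ▸ Submodule.mem_span_singleton_self R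
    exact LinearMap.mem_ker.mp this
  have hmemC : ∀ c : omegaPerp ω B, c ∈ C ↔ (c : V) ∈ B ∧ (c : V) ∈ omegaPerp ω B := by
    intro c
    rw [hC, Submodule.mem_comap, Submodule.mem_inf]
    rfl
  -- the restricted bilinear form
  set g : (omegaPerp ω B) →ₗ[ℝ] (omegaPerp ω B) →ₗ[ℝ] ℝ :=
    ω.compl₁₂ (omegaPerp ω B).subtype (omegaPerp ω B).subtype with hg
  have hgapp : ∀ u v : omegaPerp ω B, g u v = ω u v := fun u v => rfl
  have hgC : ∀ (u : omegaPerp ω B), ∀ c ∈ C, g u c = 0 := by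
    intro u c hc
    exact u.2 c.1 ((hmemC c).mp hc).1
  have hCg : ∀ c ∈ C, ∀ w : omegaPerp ω B, g c w = 0 := by
    intro c hc w
    rw [hgapp, hskew, w.2 c.1 ((hmemC c).mp hc).1]
    simp
  -- inner lift
  set inr : (omegaPerp ω B) →ₗ[ℝ] (((omegaPerp ω B) ⧸ C) →ₗ[ℝ] ℝ) :=
    { toFun := fun u => C.liftQ (g u) (fun c hc => LinearMap.mem_ker.mpr (hgC u c hc)),
      map_add' := by
        intro u v
        apply Submodule.linearMap_qext
        ext w
        simp
      map_smul' := by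
        intro a u
        apply Submodule.linearMap_qext
        ext w
        simp } with hinr
  have hCinr : ∀ c ∈ C, inr c = 0 := by
    intro c hc
    apply Submodule.linearMap_qext
    ext w
    simpa [hinr] using hCg c hc w
  set ωbar : ((omegaPerp ω B) ⧸ C) →ₗ[ℝ] ((omegaPerp ω B) ⧸ C) →ₗ[ℝ] ℝ :=
    C.liftQ inr (fun c hc => LinearMap.mem_ker.mpr (hCinr c hc)) with hωbar
  have spec : ∀ u v : omegaPerp ω B, ωbar (C.mkQ u) (C.mkQ v) = ω u v := by
    intro u v
    rw [hωbar]
    simp [Submodule.liftQ_apply, hinr, hgapp]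
  have hRnotC : (⟨R, hRW⟩ : omegaPerp ω B) ∉ C := by
    intro h
    exact hRB ((hmemC _).mp h).1
  have hne : C.mkQ ⟨R, hRW⟩ ≠ 0 := by
    intro h
    rw [Submodule.mkQ_apply, Submodule.Quotient.mk_eq_zero] at h
    exact hRnotC h
  refine ⟨hne, ωbar, ⟨?_, spec, ?_⟩, ?_⟩
  · -- alternating
    intro x
    obtain ⟨u, rfl⟩ := Submodule.mkQ_surjective C x
    rw [spec]
    exact halt u
  · -- kernel
    apply le_antisymm
    · intro x hx
      obtain ⟨u, rfl⟩ := Submodule.mkQ_surjective C x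
      rw [LinearMap.mem_ker] at hx
      have huPerp : (u : V) ∈ omegaPerp ω (omegaPerp ω B) := by
        intro a ha
        have := spec u ⟨a, ha⟩
        rw [hx] at this
        simpa using this.symm
      have hu := perp_perp_le' hdim ω halt R hR hker B hRB huPerp
      obtain ⟨b, hb, r, hr, huv⟩ := Submodule.mem_sup.mp hu
      have hKW : ∀ y ∈ Submodule.span ℝ ({R} : Set V), y ∈ omegaPerp ω B := by
        intro y hy a ha
        obtain ⟨c, rfl⟩ := Submodule.mem_span_singleton.mp hy
        rw [map_smul]
        simp [hωR]
      have hrW : r ∈ omegaPerp ω B := hKW r hr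
      have hbW : b ∈ omegaPerp ω B := by
        have : b = (u : V) - r := by rw [← huv]; abel
        rw [this]
        exact Submodule.sub_mem _ u.2 hrW
      have hu_eq : u = (⟨b, hbW⟩ : omegaPerp ω B) + ⟨r, hrW⟩ := by
        apply Subtype.ext
        simp [huv]
      rw [hu_eq, map_add]
      have h1 : C.mkQ ⟨b, hbW⟩ = 0 := by
        rw [Submodule.mkQ_apply, Submodule.Quotient.mk_eq_zero]
        exact (hmemC _).mpr ⟨hb, hbW⟩
      rw [h1, zero_add]
      obtain ⟨c, hc⟩ := Submodule.mem_span_singleton.mp hr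
      have : (⟨r, hrW⟩ : omegaPerp ω B) = c • ⟨R, hRW⟩ := by
        apply Subtype.ext
        simp [← hc]
      rw [this, map_smul]
      exact Submodule.smul_mem _ c (Submodule.mem_span_singleton_self _)
    · rw [Submodule.span_le, Set.singleton_subset_iff]
      rw [SetLike.mem_coe, LinearMap.mem_ker]
      apply Submodule.linearMap_qext
      ext v
      simp only [LinearMap.comp_apply, LinearMap.zero_apply, LinearMap.zero_comp]
      rw [spec]
      simp [hωR]
  · -- uniqueness
    intro ωbar' h
    apply Submodule.linearMap_qext
    refine LinearMap.ext fun u => ?_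
    simp only [LinearMap.comp_apply]
    apply Submodule.linearMap_qext
    refine LinearMap.ext fun v => ?_
    simp only [LinearMap.comp_apply]
    exact (h u v).trans (spec u v).symm
end

section
/- The linear map ♭ : V → V* defined by ♭(v) = ω(v,·) + η(v)η is a linear isomorphism from V onto its dual space V*. -/
/-- The linear map ♭ : V → V*, ♭(v) = ω(v,·) + η(v)η, is a linear isomorphism
from V onto its dual space V*. -/
theorem flat_bijective {n : ℕ} {V : Type*} [AddCommGroup V] [Module ℝ V]
    [FiniteDimensional ℝ V] (hdim : Module.finrank ℝ V = 2 * n + 1)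
    (ω : V →ₗ[ℝ] V →ₗ[ℝ] ℝ) (halt : ∀ x, ω x x = 0)
    (R : V) (hR : R ≠ 0) (hker : LinearMap.ker ω = Submodule.span ℝ {R})
    (η : Module.Dual ℝ V) (hη : η R = 1)
    (flat : V →ₗ[ℝ] Module.Dual ℝ V)
    (hflat : ∀ v u, flat v u = ω v u + η v * η u) :
    Function.Bijective flat := by
  have hinj : Function.Injective flat := by
    rw [injective_iff_map_eq_zero]
    intro v hv
    have h0 : ∀ u, ω v u + η v * η u = 0 := by
      intro u
      have := congrArg (fun f => f u) hv
      simpa [hflat v u] using (hflat v u ▸ this)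
    -- skew-symmetry
    have hskew : ∀ x y, ω x y = - ω y x := by
      intro x y
      have h := halt (x + y)
      simp [map_add, halt] at h
      linarith
    have hRv : ω v R = 0 := by
      have : R ∈ LinearMap.ker ω := by
        rw [hker]; exact Submodule.mem_span_singleton_self R
      have hRz : ω R v = 0 := congrFun (congrArg _ (LinearMap.mem_ker.mp this)) v
      rw [hskew v R, hRz, neg_zero]
    have hηv : η v = 0 := by
      have := h0 R
      rw [hRv, hη, mul_one, zero_add] at this
      exact this
    have hvker : v ∈ LinearMap.ker ω := by
      rw [LinearMap.mem_ker]
      ext u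
      have := h0 u
      rw [hηv, zero_mul, add_zero] at this
      simpa using this
    rw [hker, Submodule.mem_span_singleton] at hvker
    obtain ⟨c, rfl⟩ := hvker
    have : c = 0 := by simpa [hη] using hηv
    simp [this]
  have hdimeq : Module.finrank ℝ V = Module.finrank ℝ (Module.Dual ℝ V) :=
    (Subspace.dual_finrank_eq).symm
  exact ⟨hinj, (LinearMap.injective_iff_surjective_of_finrank_eq_finrank hdimeq).mp hinj⟩
end

section
/- Let β ∈ V* and let X_β be the unique vector with η(X_β) = 0 and ω(X_β,u) = β(u) − β(R)η(u) for all u ∈ V. Define the alternating bilinear form ω_β on V by ω_β(u,v) = ω(u,v) + β(u)η(v) − β(v)η(u). Then the kernel {v ∈ V : ω_β(v,u) = 0 for every u ∈ V} of ω_β equals the one-dimensional subspace spanned by E := X_β + R, and η(E) = 1. (This is the pointwise content of the proposition that for a cosymplectic structure (ω,η) and Hamiltonian H, the pair (ω + dH∧η, η) is again cosymplectic with Reeb vector field equal to the evolution vector field of H.) -/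
/-- Let β ∈ V* and let X_β be the unique vector with η(X_β) = 0 and
ω(X_β,u) = β(u) − β(R)η(u) for all u. Define ω_β(u,v) = ω(u,v) + β(u)η(v) − β(v)η(u).
Then ker ω_β = span{X_β + R} and η(X_β + R) = 1. -/
theorem modified_form_kernel {n : ℕ} {V : Type*} [AddCommGroup V] [Module ℝ V]
    [FiniteDimensional ℝ V] (hdim : Module.finrank ℝ V = 2 * n + 1)
    (ω : V →ₗ[ℝ] V →ₗ[ℝ] ℝ) (halt : ∀ x, ω x x = 0)
    (R : V) (hR : R ≠ 0) (hker : LinearMap.ker ω = Submodule.span ℝ {R})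
    (η : Module.Dual ℝ V) (hη : η R = 1)
    (β : Module.Dual ℝ V) (Xβ : V) (hX1 : η Xβ = 0)
    (hX2 : ∀ u, ω Xβ u = β u - β R * η u)
    (ωβ : V →ₗ[ℝ] V →ₗ[ℝ] ℝ)
    (hωβ : ∀ u v, ωβ u v = ω u v + β u * η v - β v * η u) :
    LinearMap.ker ωβ = Submodule.span ℝ {Xβ + R} ∧ η (Xβ + R) = 1 := by
  have hskew : ∀ x y, ω x y = - ω y x := by
    intro x y
    have h := halt (x + y)
    simp only [map_add, LinearMap.add_apply, halt x, halt y] at h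
    linarith
  have hRker : ∀ u, ω R u = 0 := by
    intro u
    have hmem : R ∈ LinearMap.ker ω := by
      rw [hker]; exact Submodule.mem_span_singleton_self R
    have h0 := LinearMap.mem_ker.mp hmem
    calc ω R u = (ω R) u := rfl
      _ = (0 : V →ₗ[ℝ] ℝ) u := by rw [h0]
      _ = 0 := rfl
  have hβX : β Xβ = 0 := by
    have h := hX2 Xβ
    rw [halt, hX1] at h
    linarith
  have hηE : η (Xβ + R) = 1 := by simp [hX1, hη]
  refine ⟨?_, hηE⟩
  have hEker : (Xβ + R) ∈ LinearMap.ker ωβ := by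
    rw [LinearMap.mem_ker]
    ext u
    simp only [LinearMap.zero_apply]
    rw [show (ωβ (Xβ + R)) u = ωβ (Xβ + R) u from rfl, hωβ]
    simp only [map_add, LinearMap.add_apply, hX2 u, hRker u, hβX, hX1, hη]
    ring
  apply le_antisymm
  · intro v hv
    have hv' : ∀ u, ωβ v u = 0 := by
      intro u
      have h0 := LinearMap.mem_ker.mp hv
      calc ωβ v u = (ωβ v) u := rfl
        _ = (0 : V →ₗ[ℝ] ℝ) u := by rw [h0]
        _ = 0 := rfl
    set w := v - η v • (Xβ + R) with hw
    have hwker : ∀ u, ωβ w u = 0 := by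
      intro u
      have hE := LinearMap.mem_ker.mp hEker
      have hEu : ωβ (Xβ + R) u = 0 := by
        calc ωβ (Xβ + R) u = (ωβ (Xβ + R)) u := rfl
          _ = (0 : V →ₗ[ℝ] ℝ) u := by rw [hE]
          _ = 0 := rfl
      simp only [hw, map_sub, map_smul, LinearMap.sub_apply, LinearMap.smul_apply,
        hv' u, hEu, smul_eq_mul, mul_zero, sub_zero]
    have hηw : η w = 0 := by
      simp [hw, hX1, hη]
    have hβw : β w = 0 := by
      have h1 := hwker R
      rw [hωβ] at h1
      have h2 : ω w R = 0 := by
        rw [hskew, hRker]; ring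
      rw [h2, hη, hηw] at h1
      linarith
    have hwω : ∀ u, ω w u = 0 := by
      intro u
      have h1 := hwker u
      rw [hωβ, hβw, hηw] at h1
      linarith
    have hwmem : w ∈ LinearMap.ker ω := by
      rw [LinearMap.mem_ker]
      ext u
      simpa using hwω u
    rw [hker, Submodule.mem_span_singleton] at hwmem
    obtain ⟨t, ht⟩ := hwmem
    have hηt : t = 0 := by
      have := hηw
      rw [← ht] at this
      simpa [hη] using this
    have hw0 : w = 0 := by rw [← ht, hηt, zero_smul]
    have hveq : v = η v • (Xβ + R) := sub_eq_zero.mp hw0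
    rw [hveq]
    exact Submodule.smul_mem _ _ (Submodule.mem_span_singleton_self _)
  · rw [Submodule.span_le, Set.singleton_subset_iff]
    exact hEker
end
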